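/- Let n ≥ 1 and let f : ℝ^n → ℝ^n be an affine map, f(x) = Wx + c with W an n×n real matrix and c ∈ ℝ^n. Then f is permutation-equivariant, i.e., f(σ·x) = σ·f(x) for every σ ∈ S_n and every x ∈ ℝ^n, if and only if there exist real numbers a, b, c₀ such that W = a·I + b·(I − 𝟙𝟙ᵀ) and c = c₀·𝟙, where I is the n×n identity matrix and 𝟙 ∈ ℝ^n is the all-ones vector. -/

import Mathlib

/-- The coordinate-permutation action of `S_n` on ℝ^n: `(σ·x)_j = x_{σ⁻¹(j)}`. -/
def permAct {n : ℕ} (σ : Equiv.Perm (Fin n)) (x : Fin n → ℝ) : Fin n → ℝ :=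
  fun j => x (σ⁻¹ j)

/-- An affine map `f(x) = Wx + c` on ℝ^n is permutation-equivariant iff
`W = aI + b(I - 𝟙𝟙ᵀ)` and `c = c₀𝟙` for some reals `a, b, c₀`. -/
theorem equivariant_iff (n : ℕ) (hn : 1 ≤ n)
    (W : Matrix (Fin n) (Fin n) ℝ) (c : Fin n → ℝ) :
    (∀ σ : Equiv.Perm (Fin n), ∀ x : Fin n → ℝ,
        W.mulVec (permAct σ x) + c = permAct σ (W.mulVec x + c)) ↔
      ∃ a b c₀ : ℝ,
        W = a • (1 : Matrix (Fin n) (Fin n) ℝ) +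
              b • ((1 : Matrix (Fin n) (Fin n) ℝ) - Matrix.of fun _ _ => (1 : ℝ)) ∧
        c = fun _ => c₀ := by
  have hE : ∀ a b : ℝ, ∀ p q : Fin n,
      ((a • (1 : Matrix (Fin n) (Fin n) ℝ) +
        b • ((1 : Matrix (Fin n) (Fin n) ℝ) - Matrix.of fun _ _ => (1 : ℝ))) :
        Matrix (Fin n) (Fin n) ℝ) p q
        = (a + b) * (if p = q then 1 else 0) - b := by
    intro a b p q
    simp only [Matrix.add_apply, Matrix.smul_apply, Matrix.sub_apply, Matrix.one_apply,
      Matrix.of_apply, smul_eq_mul]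
    split <;> ring
  constructor
  · intro h
    set z : Fin n := ⟨0, hn⟩ with hz
    -- c is constant
    have hc : ∀ σ : Equiv.Perm (Fin n), ∀ j, c j = c (σ⁻¹ j) := by
      intro σ j
      have h0 : permAct σ (0 : Fin n → ℝ) = 0 := rfl
      have := congrFun (h σ 0) j
      rw [h0, Matrix.mulVec_zero] at this
      simpa [permAct] using this
    have hcconst : ∀ j, c j = c z := by
      intro j
      have := hc (Equiv.swap z j) j
      simpa [Equiv.swap_apply_right] using this
    -- W invariance
    have key : ∀ σ : Equiv.Perm (Fin n), ∀ j k, W (σ j) (σ k) = W j k := by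
      intro σ j k
      have hx := congrFun (h σ (Pi.single k 1)) (σ j)
      have hps : permAct σ (Pi.single k 1) = Pi.single (σ k) 1 := by
        funext i
        simp only [permAct, Pi.single_apply]
        by_cases hik : i = σ k
        · simp [hik]
        · have : σ⁻¹ i ≠ k := fun hh => hik (by simpa using congrArg σ hh)
          simpa [hik] using this
      rw [hps] at hx
      simp only [Pi.add_apply, permAct, Equiv.Perm.inv_def, Equiv.symm_apply_apply, Matrix.mulVec_single,
        mul_one, MulOpposite.op_one, one_smul, Matrix.col_apply] at hx
      have hcc := hc σ (σ j)
      simp only [Equiv.Perm.inv_def, Equiv.symm_apply_apply] at hcc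
      linarith [hx, hcc]
    rcases Nat.lt_or_ge n 2 with h2 | h2
    · -- n = 1
      have hn1 : n = 1 := le_antisymm (by omega) hn
      refine ⟨W z z, 0, c z, ?_, ?_⟩
      · ext p q
        have hp : p = z := by subst hn1; exact Subsingleton.elim _ _
        have hq : q = z := by subst hn1; exact Subsingleton.elim _ _
        rw [hE, hp, hq]
        simp
      · funext j; exact hcconst j
    · -- n ≥ 2
      set i1 : Fin n := ⟨1, h2⟩ with hi1
      have hzi1 : z ≠ i1 := by simp [hz, hi1, Fin.ext_iff]
      refine ⟨W z z, -(W z i1), c z, ?_, ?_⟩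
      · ext p q
        rw [hE]
        by_cases hpq : p = q
        · subst hpq
          have := key (Equiv.swap z p) z z
          rw [Equiv.swap_apply_left] at this
          simp [this]
        · -- off-diagonal: W p q = W z i1
          have hoff : W p q = W z i1 := by
            set τ : Equiv.Perm (Fin n) := Equiv.swap z p with hτ
            set j₁ : Fin n := τ i1 with hj₁
            have hj₁p : j₁ ≠ p := by
              rw [hj₁]
              intro hh
              have : τ i1 = τ z := by rw [hh, hτ, Equiv.swap_apply_left]
              exact hzi1 ((Equiv.injective τ this).symm)
            set σ : Equiv.Perm (Fin n) := (Equiv.swap q j₁) * τ with hσ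
            have hσz : σ z = p := by
              rw [hσ]
              simp only [Equiv.Perm.coe_mul, Function.comp_apply, hτ, Equiv.swap_apply_left]
              rw [Equiv.swap_apply_of_ne_of_ne hpq (Ne.symm hj₁p)]
            have hσi1 : σ i1 = q := by
              rw [hσ]
              simp only [Equiv.Perm.coe_mul, Function.comp_apply, ← hj₁,
                Equiv.swap_apply_right]
            have := key σ z i1
            rw [hσz, hσi1] at this
            exact this
          rw [hoff]
          simp [hpq]
      · funext j; exact hcconst j
  · rintro ⟨a, b, c₀, rfl, rfl⟩
    intro σ x
    funext j
    have hsum : ∀ (p : Fin n) (v : Fin n → ℝ),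
        (∑ i, ((a + b) * (if p = i then 1 else 0) - b) * v i)
          = (a + b) * v p - b * ∑ i, v i := by
      intro p v
      simp only [sub_mul, Finset.sum_sub_distrib, mul_assoc, ite_mul, one_mul, zero_mul,
        mul_ite, mul_zero, Finset.sum_ite_eq, Finset.mem_univ, if_true, ← Finset.mul_sum]
    simp only [Pi.add_apply, Matrix.mulVec, dotProduct, permAct, hE, hsum]
    rw [Equiv.sum_comp σ⁻¹ x]
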